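/- Fix an integer n ≥ 1 and real numbers x₁, …, x_n pairwise distinct, y₁, …, y_n pairwise distinct, with 1 + x_j·y_k > 0 for all j, k. Let S := (1 + x_j·y_k)_{j,k=1}^n and α ∈ ℝ. If α ∉ {0, 1, …, n−2}, then the entrywise power S^{∘α} is non-singular (det S^{∘α} ≠ 0). If α ∈ {0, 1, …, n−2}, then S^{∘α} has rank α + 1. -/

import Mathlib

open Matrix Set

open Matrix Set

private lemma hd_term (a p t : ℝ) (h : 0 < 1 + a * t) :
    HasDerivAt (fun z : ℝ => (1 + a * z) ^ p) (p * a * (1 + a * t) ^ (p - 1)) t := by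
  have h1 : HasDerivAt (fun z : ℝ => 1 + a * z) a t := by
    simpa using (hasDerivAt_id t).const_mul a |>.const_add 1
  have := h1.rpow_const (p := p) (Or.inl h.ne')
  convert this using 1; ring

private lemma key : ∀ (m : ℕ) (α : ℝ) (x c : Fin (m + 1) → ℝ) (I : Set ℝ),
    Convex ℝ I → (∀ t ∈ I, ∀ i, 0 < 1 + x i * t) → Function.Injective x →
    (∀ i, c i ≠ 0) → (∀ j : ℕ, (j : ℤ) ≤ (m : ℤ) - 1 → α ≠ j) →
    ∀ s : Finset ℝ, ↑s ⊆ I → (∀ z ∈ s, ∑ i, c i * (1 + x i * z) ^ α = 0) →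
    s.card ≤ m := by
  intro m
  induction m with
  | zero =>
    intro α x c I hI hpos hx hc hα s hsI hs
    rw [Nat.le_zero, Finset.card_eq_zero]
    by_contra hne
    obtain ⟨z, hz⟩ := Finset.nonempty_iff_ne_empty.mpr hne
    have h0 := hs z hz
    rw [Fin.sum_univ_one] at h0
    exact (mul_ne_zero (hc 0)
      (Real.rpow_pos_of_pos (hpos z (hsI hz) 0) α).ne') h0
  | succ m ih =>
    intro α x c I hI hpos hx hc hα s hsI hs
    by_contra hcard
    push_neg at hcard
    obtain ⟨s', hs's, hs'card⟩ := Finset.exists_subset_card_eq (show m + 2 ≤ s.card by omega)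
    have hs'I : ↑s' ⊆ I := fun z hz => hsI (hs's hz)
    set L : Fin (m + 2) := Fin.last (m + 1) with hL
    -- the function g and its zeros
    set g : ℝ → ℝ := fun z => ∑ i, c i * ((1 + x i * z) ^ α * (1 + x L * z) ^ (-α)) with hg
    have hgz : ∀ z ∈ s', g z = 0 := by
      intro z hz
      have := hs z (hs's hz)
      calc g z = (∑ i, c i * (1 + x i * z) ^ α) * (1 + x L * z) ^ (-α) := by
            rw [Finset.sum_mul]; exact Finset.sum_congr rfl fun i _ => by ring
        _ = 0 := by rw [this, zero_mul]
    -- derivative of g on I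
    have hderiv : ∀ t ∈ I, HasDerivAt g
        (∑ i, α * (x i - x L) * c i *
          ((1 + x i * t) ^ (α - 1) * (1 + x L * t) ^ (-α - 1))) t := by
      intro t ht
      have hA : 0 < 1 + x L * t := hpos t ht L
      refine HasDerivAt.fun_sum fun i _ => ?_
      have hB : 0 < 1 + x i * t := hpos t ht i
      have h1 := hd_term (x i) α t hB
      have h2 := hd_term (x L) (-α) t hA
      have := ((h1.mul h2).const_mul (c i))
      convert this using 1
      case e'_4 => rfl
      case e'_8 => rfl
      have eA : (1 + x L * t) ^ (-α) = (1 + x L * t) ^ (-α - 1) * (1 + x L * t) := by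
        rw [← Real.rpow_add_one hA.ne']; ring_nf
      have eB : (1 + x i * t) ^ α = (1 + x i * t) ^ (α - 1) * (1 + x i * t) := by
        rw [← Real.rpow_add_one hB.ne']; ring_nf
      rw [eA, eB]; ring
    -- Rolle between consecutive zeros
    set e := s'.orderEmbOfFin hs'card with he
    have heI : ∀ i, (e i : ℝ) ∈ I := fun i => hs'I (s'.orderEmbOfFin_mem hs'card i)
    have hz : ∀ i : Fin (m + 1), ∃ w ∈ Ioo (e i.castSucc : ℝ) (e i.succ),
        (∑ j, α * (x j - x L) * c j *
          ((1 + x j * w) ^ (α - 1) * (1 + x L * w) ^ (-α - 1))) = 0 := by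
      intro i
      have hab : (e i.castSucc : ℝ) < e i.succ := e.strictMono Fin.castSucc_lt_succ
      have hsub : Icc (e i.castSucc : ℝ) (e i.succ) ⊆ I :=
        (hI.ordConnected).out (heI i.castSucc) (heI i.succ)
      have hcont : ContinuousOn g (Icc (e i.castSucc : ℝ) (e i.succ)) := by
        refine continuousOn_finset_sum _ fun j _ => continuousOn_const.mul ?_
        refine ContinuousOn.mul ?_ ?_
        · exact ((continuous_const.add (continuous_const.mul continuous_id)).continuousOn).rpow_const
            fun w hw => Or.inl (hpos w (hsub hw) j).ne'
        · exact ((continuous_const.add (continuous_const.mul continuous_id)).continuousOn).rpow_const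
            fun w hw => Or.inl (hpos w (hsub hw) L).ne'
      have := exists_hasDerivAt_eq_zero hab hcont
        ((hgz _ (s'.orderEmbOfFin_mem hs'card i.castSucc)).trans
         (hgz _ (s'.orderEmbOfFin_mem hs'card i.succ)).symm)
        (fun w hw => hderiv w (hsub (Ioo_subset_Icc_self hw)))
      exact this
    choose z hz1 hz2 using hz
    have hzmono : StrictMono z := by
      rw [Fin.strictMono_iff_lt_succ]
      intro i
      calc z i.castSucc < (e i.castSucc.succ : ℝ) := (hz1 i.castSucc).2
        _ = (e i.succ.castSucc : ℝ) := by rw [Fin.succ_castSucc]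
        _ < z i.succ := (hz1 i.succ).1
    have hzI : ∀ i, z i ∈ I := by
      intro i
      exact (hI.ordConnected).out (heI i.castSucc) (heI i.succ)
        (Ioo_subset_Icc_self (⟨(hz1 i).1, (hz1 i).2⟩))
    -- reduced system
    have hα0 : α ≠ 0 := by
      have := hα 0 (by push_cast; omega); simpa using this
    set c' : Fin (m + 1) → ℝ := fun j => α * (x j.castSucc - x L) * c j.castSucc with hc'
    have hzero' : ∀ i : Fin (m + 1),
        ∑ j : Fin (m + 1), c' j * (1 + x j.castSucc * z i) ^ (α - 1) = 0 := by
      intro i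
      have hq : (0:ℝ) < (1 + x L * z i) ^ (-α - 1) :=
        Real.rpow_pos_of_pos (hpos _ (hzI i) L) _
      have h0 := hz2 i
      have hfac : (∑ j, α * (x j - x L) * c j *
            ((1 + x j * z i) ^ (α - 1) * (1 + x L * z i) ^ (-α - 1)))
          = (∑ j, α * (x j - x L) * c j * (1 + x j * z i) ^ (α - 1))
            * (1 + x L * z i) ^ (-α - 1) := by
        rw [Finset.sum_mul]; exact Finset.sum_congr rfl fun j _ => by ring
      rw [hfac, mul_eq_zero] at h0
      rcases h0 with h0 | h0
      · rw [Fin.sum_univ_castSucc] at h0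
        simpa [hc', ← hL] using h0
      · exact absurd h0 hq.ne'
    -- apply the induction hypothesis
    have hinj' : Function.Injective (fun j : Fin (m + 1) => x j.castSucc) :=
      fun a b hab => Fin.castSucc_injective _ (hx hab)
    have hc'ne : ∀ j, c' j ≠ 0 := by
      intro j
      refine mul_ne_zero (mul_ne_zero hα0 (sub_ne_zero.mpr fun h => ?_)) (hc _)
      exact absurd (hx h) (Fin.castSucc_lt_last j).ne
    have hα' : ∀ j : ℕ, (j : ℤ) ≤ (m : ℤ) - 1 → α - 1 ≠ j := by
      intro j hj habs
      refine hα (j + 1) (by push_cast; omega) ?_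
      push_cast; linarith
    set t : Finset ℝ := Finset.image z Finset.univ with ht
    have htI : ↑t ⊆ I := by
      intro w hw
      simp only [ht, Finset.coe_image, Finset.coe_univ, Set.image_univ] at hw
      obtain ⟨i, rfl⟩ := hw
      exact hzI i
    have htzero : ∀ w ∈ t, ∑ j, c' j * (1 + x (Fin.castSucc j) * w) ^ (α - 1) = 0 := by
      intro w hw
      simp only [ht, Finset.mem_image] at hw
      obtain ⟨i, _, rfl⟩ := hw
      exact hzero' i
    have := ih (α - 1) (fun j => x j.castSucc) c' I hI
      (fun w hw i => hpos w hw i.castSucc) hinj' hc'ne hα' t htI htzero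
    rw [ht, Finset.card_image_of_injective _ hzmono.injective, Finset.card_univ,
      Fintype.card_fin] at this
    omega

private lemma convexI (n : ℕ) (x : Fin n → ℝ) :
    Convex ℝ {t : ℝ | ∀ j : Fin n, 0 < 1 + x j * t} := by
  intro y1 h1 y2 h2 a b ha hb hab
  intro j
  have e : 1 + x j * (a • y1 + b • y2) = a * (1 + x j * y1) + b * (1 + x j * y2) := by
    simp only [smul_eq_mul]; nlinarith [hab]
  rw [e]
  rcases eq_or_lt_of_le ha with h | h
  · rw [← h]; simpa [show b = 1 by linarith] using h2 j
  · exact add_pos_of_pos_of_nonneg (mul_pos h (h1 j)) (mul_nonneg hb (h2 j).le)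

private lemma det_part (n : ℕ) (x y : Fin n → ℝ) (hx : Function.Injective x)
    (hy : Function.Injective y) (hpos : ∀ j k, 0 < 1 + x j * y k) (α : ℝ)
    (hα : ∀ k : ℕ, (k : ℤ) ≤ (n : ℤ) - 2 → α ≠ k) :
    (Matrix.of fun j k => (1 + x j * y k) ^ α).det ≠ 0 := by
  intro hdet
  obtain ⟨c, hc0, hcM⟩ := Matrix.exists_vecMul_eq_zero_iff.mpr hdet
  classical
  set supp : Finset (Fin n) := Finset.univ.filter (fun j => c j ≠ 0) with hsupp
  have hsne : supp.Nonempty := by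
    rcases Function.ne_iff.mp hc0 with ⟨j, hj⟩
    exact ⟨j, by simp [hsupp]; simpa using hj⟩
  obtain ⟨m, hm⟩ : ∃ m, supp.card = m + 1 :=
    ⟨supp.card - 1, by have := Finset.card_pos.mpr hsne; omega⟩
  have hmn : m + 1 ≤ n := by
    have := Finset.card_le_univ supp
    rwa [hm, Fintype.card_fin] at this
  set e := supp.orderEmbOfFin hm with he
  have hemem : ∀ i, e i ∈ supp := fun i => supp.orderEmbOfFin_mem hm i
  set I : Set ℝ := {t : ℝ | ∀ j : Fin n, 0 < 1 + x j * t} with hI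
  have hsum : ∀ w : ℝ, ∑ i : Fin (m + 1), c (e i) * (1 + x (e i) * w) ^ α
      = ∑ j : Fin n, c j * (1 + x j * w) ^ α := by
    intro w
    have h1 : ∑ i : Fin (m + 1), c (e i) * (1 + x (e i) * w) ^ α
        = ∑ j ∈ supp, c j * (1 + x j * w) ^ α := by
      rw [← Finset.sum_coe_sort supp (fun j => c j * (1 + x j * w) ^ α)]
      exact Fintype.sum_equiv (supp.orderIsoOfFin hm).toEquiv _ _
        (fun i => by rw [RelIso.coe_fn_toEquiv, Finset.coe_orderIsoOfFin_apply])
    rw [h1]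
    refine Finset.sum_subset (Finset.subset_univ supp) fun j _ hj => ?_
    have : c j = 0 := by
      by_contra hcj; exact hj (by simp [hsupp, hcj])
    rw [this, zero_mul]
  have hzero : ∀ w ∈ Finset.image y Finset.univ,
      ∑ i : Fin (m + 1), c (e i) * (1 + x (e i) * w) ^ α = 0 := by
    intro w hw
    rcases Finset.mem_image.mp hw with ⟨k, _, rfl⟩
    rw [hsum]
    have := congrFun hcM k
    simpa [Matrix.vecMul, dotProduct] using this
  have hcard := key m α (fun i => x (e i)) (fun i => c (e i)) I
    (convexI n x) (fun t ht i => ht (e i))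
    (fun a b hab => e.injective (hx hab))
    (fun i => by simpa [hsupp] using hemem i)
    (fun j hj => hα j (by omega))
    (Finset.image y Finset.univ)
    (by intro w hw
        simp only [Finset.coe_image, Finset.coe_univ, Set.image_univ] at hw
        obtain ⟨k, rfl⟩ := hw
        exact fun j => hpos j k)
    hzero
  rw [Finset.card_image_of_injective _ hy, Finset.card_univ, Fintype.card_fin] at hcard
  omega

private lemma rank_part (n : ℕ) (x y : Fin n → ℝ) (hx : Function.Injective x)
    (hy : Function.Injective y) (k : ℕ) (hk : k + 2 ≤ n) :
    (Matrix.of fun j l : Fin n => (1 + x j * y l) ^ ((k : ℕ) : ℝ)).rank = k + 1 := by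
  classical
  set M : Matrix (Fin n) (Fin n) ℝ :=
    Matrix.of fun j l : Fin n => (1 + x j * y l) ^ ((k : ℕ) : ℝ) with hM
  set A : Matrix (Fin n) (Fin (k + 1)) ℝ :=
    Matrix.of fun j i => (k.choose i : ℝ) * x j ^ (i : ℕ) with hA
  set B : Matrix (Fin (k + 1)) (Fin n) ℝ :=
    Matrix.of fun i l => y l ^ (i : ℕ) with hB
  have hMP : M = A * B := by
    ext j l
    rw [hM, Matrix.mul_apply]
    simp only [Matrix.of_apply, hA, hB]
    calc (1 + x j * y l) ^ ((k : ℕ) : ℝ) = (x j * y l + 1) ^ (k : ℕ) := by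
          rw [Real.rpow_natCast, add_comm]
      _ = ∑ i ∈ Finset.range (k + 1),
            (x j * y l) ^ i * 1 ^ (k - i) * (k.choose i : ℝ) := add_pow _ _ _
      _ = ∑ i : Fin (k + 1), (k.choose (i : ℕ) : ℝ) * x j ^ (i : ℕ) * y l ^ (i : ℕ) := by
          rw [Fin.sum_univ_eq_sum_range
            (fun i => (k.choose i : ℝ) * x j ^ i * y l ^ i)]
          exact Finset.sum_congr rfl fun i _ => by rw [one_pow, mul_pow]; ring
  have hub : M.rank ≤ k + 1 := by
    rw [hMP]
    refine le_trans (Matrix.rank_mul_le_right A B) ?_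
    simpa using B.rank_le_card_height
  -- lower bound via an invertible (k+1)×(k+1) submatrix
  have hkn : k + 1 ≤ n := by omega
  set f : Fin (k + 1) → Fin n := Fin.castLE hkn with hf
  have hfinj : Function.Injective f := Fin.castLE_injective hkn
  set N : Matrix (Fin (k + 1)) (Fin (k + 1)) ℝ := M.submatrix f f with hN
  have hNAB : N = A.submatrix f id * B.submatrix id f := by
    rw [hN, hMP]; exact Matrix.submatrix_mul A B f id f Function.bijective_id
  have hdetA : (A.submatrix f id).det ≠ 0 := by
    have : A.submatrix f id =
        (Matrix.vandermonde fun i => x (f i)) * Matrix.diagonal (fun i : Fin (k+1) => (k.choose i : ℝ)) := by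
      ext j i
      rw [Matrix.mul_diagonal]
      simp [hA, Matrix.vandermonde, mul_comm]
    rw [this, Matrix.det_mul, Matrix.det_diagonal]
    refine mul_ne_zero (Matrix.det_vandermonde_ne_zero_iff.mpr (hx.comp hfinj)) ?_
    refine (Finset.prod_pos fun i _ => ?_).ne'
    exact_mod_cast Nat.choose_pos (Nat.lt_succ_iff.mp i.isLt)
  have hdetB : (B.submatrix id f).det ≠ 0 := by
    have : B.submatrix id f = (Matrix.vandermonde fun i => y (f i))ᵀ := by
      ext i l
      simp [hB, Matrix.vandermonde]
    rw [this, Matrix.det_transpose]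
    exact Matrix.det_vandermonde_ne_zero_iff.mpr (hy.comp hfinj)
  have hdetN : N.det ≠ 0 := by
    rw [hNAB, Matrix.det_mul]; exact mul_ne_zero hdetA hdetB
  have hrankN : N.rank = k + 1 := by
    rw [Matrix.rank_of_isUnit N (Matrix.isUnit_iff_isUnit_det N |>.mpr (isUnit_iff_ne_zero.mpr hdetN))]
    simp
  have hlb : k + 1 ≤ M.rank := by
    have h1 : M.submatrix f id = (1 : Matrix (Fin n) (Fin n) ℝ).submatrix f ⇑(Equiv.refl (Fin n)) * M := by
      rw [Matrix.one_submatrix_mul]; simp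
    have h2 : N = M.submatrix f id * (1 : Matrix (Fin n) (Fin n) ℝ).submatrix ⇑(Equiv.refl (Fin n)) f := by
      rw [Matrix.mul_submatrix_one]; simp [hN, Matrix.submatrix_submatrix]
    calc k + 1 = N.rank := hrankN.symm
      _ ≤ (M.submatrix f id).rank := by rw [h2]; exact Matrix.rank_mul_le_left _ _
      _ ≤ M.rank := by rw [h1]; exact Matrix.rank_mul_le_right _ _
  omega

theorem stmt15 (n : ℕ) (hn : 1 ≤ n) (x y : Fin n → ℝ)
    (hx : Function.Injective x) (hy : Function.Injective y)
    (hpos : ∀ j k, 0 < 1 + x j * y k) (α : ℝ) :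
    ((∀ k : ℕ, (k : ℤ) ≤ (n : ℤ) - 2 → α ≠ k) →
      (Matrix.of fun j k => (1 + x j * y k) ^ α).det ≠ 0) ∧
    (∀ k : ℕ, (k : ℤ) ≤ (n : ℤ) - 2 → α = k →
      (Matrix.of fun j k => (1 + x j * y k) ^ α).rank = k + 1) := by
  constructor
  · exact fun hα => det_part n x y hx hy hpos α hα
  · intro k hk hαk
    subst hαk
    exact rank_part n x y hx hy k (by omega)
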